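/- For all natural numbers k ≥ 1, N and r ≥ 1 there exists a natural number N̄ such that for every coloring c : FIN_{k+1}(N̄) → {0,…,r−1} there exists a block sequence h = (h_i)_{i<N} of length N of elements of FIN_{k+1}(N̄) with the following property: for all exponents s_0,…,s_{N−1}, t_0,…,t_{N−1} ∈ {0,…,k+1}, if f = Σ_{i<N} T^{k+1−s_i}(h_i) and g = Σ_{i<N} T^{k+1−t_i}(h_i) both belong to FIN_{k+1} and for every i < N one has s_i = k+1 if and only if t_i = k+1, then c(f) = c(g). -/

import Mathlib

/-- `f` is a member of `FIN_k`: finitely supported `ℕ`-valued function with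
values `≤ k` that attains the value `k`. -/
def IsFINk (k : ℕ) (f : ℕ →₀ ℕ) : Prop :=
  (∀ n, f n ≤ k) ∧ (∃ n, f n = k)

/-- `FIN_k(N)`: the members of `FIN_k` supported inside `{0, …, N-1}`. -/
def FINkN (k N : ℕ) : Set (ℕ →₀ ℕ) :=
  {f | IsFINk k f ∧ ∀ n ∈ f.support, n < N}

/-- The block relation `f < g`: the support of `f` lies entirely below the support of `g`. -/
def Blk (f g : ℕ →₀ ℕ) : Prop :=
  ∀ i ∈ f.support, ∀ j ∈ g.support, i < j

/-- The Tetris operation `(T f)(x) = max {0, f x - 1}`. -/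
noncomputable def Tetris (f : ℕ →₀ ℕ) : ℕ →₀ ℕ :=
  Finsupp.mapRange (· - 1) (by simp) f

/-- `(F i)_{i<m}` is a block sequence of length `m`. -/
def IsBlockSeqFin (m : ℕ) (F : ℕ → (ℕ →₀ ℕ)) : Prop :=
  ∀ i j : ℕ, i < j → j < m → Blk (F i) (F j)

/-- `(G i)_{i<d}` is a block sequence (a `d`-tuple version). -/
def IsBlockTuple (d : ℕ) (G : Fin d → (ℕ →₀ ℕ)) : Prop :=
  ∀ i j : Fin d, i < j → Blk (G i) (G j)

/-- The combinatorial space `⟨F i⟩_{i<m}` generated by a block sequence `(F i)_{i<m}`: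
all sums `T^{l_1}(f_{i_1}) + … + T^{l_p}(f_{i_p})` with `i_1 < … < i_p < m` and
`min {l_1, …, l_p} = 0`. -/
def CombSpace (m : ℕ) (F : ℕ → (ℕ →₀ ℕ)) : Set (ℕ →₀ ℕ) :=
  {g | ∃ (s : Finset ℕ) (l : ℕ → ℕ), s.Nonempty ∧ (∀ i ∈ s, i < m) ∧
      (∃ i ∈ s, l i = 0) ∧ g = ∑ i ∈ s, Tetris^[l i] (F i)}

lemma tetris_apply (f : ℕ →₀ ℕ) (i : ℕ) : Tetris f i = f i - 1 :=
  Finsupp.mapRange_apply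

lemma tetris_iter_apply (l : ℕ) (f : ℕ →₀ ℕ) (i : ℕ) : (Tetris^[l] f) i = f i - l := by
  induction l generalizing f with
  | zero => simp
  | succ n ih =>
    rw [Function.iterate_succ_apply, ih, tetris_apply]
    omega

lemma tetris_add_of_disj {f g : ℕ →₀ ℕ} (h : ∀ i, f i = 0 ∨ g i = 0) :
    Tetris (f + g) = Tetris f + Tetris g := by
  ext i
  rw [Finsupp.add_apply, tetris_apply, tetris_apply, tetris_apply, Finsupp.add_apply]
  rcases h i with h' | h' <;> omega

/-- support of `f` lies strictly below `n`. -/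
def Below (n : ℕ) (f : ℕ →₀ ℕ) : Prop := ∀ i, f i ≠ 0 → i < n
/-- support of `f` lies at or above `n`. -/
def Above (n : ℕ) (f : ℕ →₀ ℕ) : Prop := ∀ i, f i ≠ 0 → n ≤ i

lemma exists_below (f : ℕ →₀ ℕ) : ∃ n, Below n f := by
  refine ⟨f.support.sup id + 1, fun i hi => ?_⟩
  have : i ∈ f.support := Finsupp.mem_support_iff.mpr hi
  have h2 : id i ≤ f.support.sup id := Finset.le_sup (f := id) this
  simp only [id] at h2
  omega

lemma disj_of_below_above {n : ℕ} {f g : ℕ →₀ ℕ} (hf : Below n f) (hg : Above n g) :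
    ∀ i, f i = 0 ∨ g i = 0 := by
  intro i
  by_contra hc
  push_neg at hc
  exact absurd (hg i hc.2) (by have := hf i hc.1; omega)

lemma isFINk_add {a b : ℕ} {f g : ℕ →₀ ℕ} (hf : IsFINk a f) (hg : IsFINk b g)
    (hd : ∀ i, f i = 0 ∨ g i = 0) : IsFINk (max a b) (f + g) := by
  constructor
  · intro i
    rw [Finsupp.add_apply]
    rcases hd i with h | h <;> rw [h]
    · have := hg.1 i; omega
    · have := hf.1 i; omega
  · rcases le_total a b with hab | hab
    · obtain ⟨i, hi⟩ := hg.2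
      refine ⟨i, ?_⟩
      rw [Finsupp.add_apply, hi]
      rcases hd i with h | h
      · rw [h]; omega
      · have := hf.1 i
        rcases Nat.eq_zero_or_pos b with hb | hb
        · omega
        · rw [h] at hi; omega
    · obtain ⟨i, hi⟩ := hf.2
      refine ⟨i, ?_⟩
      rw [Finsupp.add_apply, hi]
      rcases hd i with h | h
      · rw [h] at hi
        have := hg.1 i
        rcases Nat.eq_zero_or_pos a with ha | ha
        · omega
        · omega
      · rw [h]; omega

lemma isFINk_tetris {a : ℕ} {f : ℕ →₀ ℕ} (hf : IsFINk (a + 1) f) : IsFINk a (Tetris f) := by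
  constructor
  · intro i; rw [tetris_apply]; have := hf.1 i; omega
  · obtain ⟨i, hi⟩ := hf.2; exact ⟨i, by rw [tetris_apply, hi]; omega⟩

lemma isFINk_tetris_iter {a b : ℕ} {f : ℕ →₀ ℕ} (hf : IsFINk (a + b) f) :
    IsFINk a (Tetris^[b] f) := by
  induction b generalizing f with
  | zero => simpa using hf
  | succ n ih =>
    rw [Function.iterate_succ_apply]
    exact ih (isFINk_tetris (by rwa [Nat.add_succ] at hf))

lemma tetris_iter_eq_zero {a : ℕ} {f : ℕ →₀ ℕ} (hf : ∀ i, f i ≤ a) : Tetris^[a] f = 0 := by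
  ext i
  rw [tetris_iter_apply]
  have := hf i
  simp; omega

/-- a section of Tetris -/
noncomputable def sec (f : ℕ →₀ ℕ) : ℕ →₀ ℕ :=
  Finsupp.mapRange (fun v => if v = 0 then 0 else v + 1) (by simp) f

lemma sec_apply (f : ℕ →₀ ℕ) (i : ℕ) : sec f i = if f i = 0 then 0 else f i + 1 :=
  Finsupp.mapRange_apply

lemma tetris_sec (f : ℕ →₀ ℕ) : Tetris (sec f) = f := by
  ext i
  rw [tetris_apply, sec_apply]
  split <;> omega

lemma isFINk_sec {a : ℕ} {f : ℕ →₀ ℕ} (ha : 1 ≤ a) (hf : IsFINk a f) :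
    IsFINk (a + 1) (sec f) := by
  constructor
  · intro i; rw [sec_apply]; have := hf.1 i; split <;> omega
  · obtain ⟨i, hi⟩ := hf.2
    exact ⟨i, by rw [sec_apply, hi]; simp; omega⟩

lemma above_sec {n : ℕ} {f : ℕ →₀ ℕ} (hf : Above n f) : Above n (sec f) := by
  intro i hi
  rw [sec_apply] at hi
  exact hf i (by intro h; rw [h] at hi; simp at hi)

lemma above_tetris_iter {n l : ℕ} {f : ℕ →₀ ℕ} (hf : Above n f) : Above n (Tetris^[l] f) := by
  intro i hi
  rw [tetris_iter_apply] at hi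
  exact hf i (by omega)

open Filter

attribute [local instance] Ultrafilter.add Ultrafilter.addSemigroup

/-- cofinal ultrafilters concentrating on `FIN_j` -/
def gam (j : ℕ) : Set (Ultrafilter (ℕ →₀ ℕ)) :=
  {U | (∀ᶠ f in U, IsFINk j f) ∧ ∀ n, ∀ᶠ f in U, Above n f}

noncomputable def tmap (U : Ultrafilter (ℕ →₀ ℕ)) : Ultrafilter (ℕ →₀ ℕ) := U.map Tetris

lemma pure_zero_add (U : Ultrafilter (ℕ →₀ ℕ)) : (pure 0 : Ultrafilter (ℕ →₀ ℕ)) + U = U :=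
  Ultrafilter.coe_inj.mp <| Filter.ext' fun p => by
    simp [Ultrafilter.eventually_add]

lemma add_pure_zero (U : Ultrafilter (ℕ →₀ ℕ)) : U + (pure 0 : Ultrafilter (ℕ →₀ ℕ)) = U :=
  Ultrafilter.coe_inj.mp <| Filter.ext' fun p => by
    simp [Ultrafilter.eventually_add]

lemma gam_add {a b : ℕ} {U V : Ultrafilter (ℕ →₀ ℕ)} (hU : U ∈ gam a) (hV : V ∈ gam b) :
    U + V ∈ gam (max a b) := by
  constructor
  · rw [Ultrafilter.eventually_add]
    filter_upwards [hU.1] with f hf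
    obtain ⟨n, hn⟩ := exists_below f
    filter_upwards [hV.1, hV.2 n] with g hg hg'
    exact isFINk_add hf hg (disj_of_below_above hn hg')
  · intro n
    rw [Ultrafilter.eventually_add]
    filter_upwards [hU.2 n] with f hf
    filter_upwards [hV.2 n] with g hg
    intro i hi
    rw [Finsupp.add_apply] at hi
    rcases Nat.eq_zero_or_pos (f i) with h | h
    · exact hg i (by omega)
    · exact hf i (by omega)

lemma tmap_gam {j : ℕ} {U : Ultrafilter (ℕ →₀ ℕ)} (hU : U ∈ gam (j + 1)) : tmap U ∈ gam j := by
  constructor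
  · rw [tmap, Ultrafilter.coe_map, Filter.eventually_map]
    filter_upwards [hU.1] with f hf using isFINk_tetris hf
  · intro n
    rw [tmap, Ultrafilter.coe_map, Filter.eventually_map]
    filter_upwards [hU.2 n] with f hf
    intro i hi
    rw [tetris_apply] at hi
    exact hf i (by omega)

lemma tmap_add {U V : Ultrafilter (ℕ →₀ ℕ)} (hV : ∀ n, ∀ᶠ g in V, Above n g) :
    tmap (U + V) = tmap U + tmap V := by
  refine Ultrafilter.coe_inj.mp <| Filter.ext' fun p => ?_
  simp only [tmap, Ultrafilter.eventually_add, Ultrafilter.coe_map, Filter.eventually_map]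
  refine eventually_congr (Eventually.of_forall fun f => ?_)
  obtain ⟨n, hn⟩ := exists_below f
  refine eventually_congr ?_
  filter_upwards [hV n] with g hg
  rw [tetris_add_of_disj (disj_of_below_above hn hg)]

lemma gam_isClosed (j : ℕ) : IsClosed (gam j) := by
  have : gam j = {U : Ultrafilter (ℕ →₀ ℕ) | {f | IsFINk j f} ∈ U} ∩
      ⋂ n, {U : Ultrafilter (ℕ →₀ ℕ) | {f | Above n f} ∈ U} := by
    ext U
    simp only [gam, Set.mem_setOf_eq, Set.mem_inter_iff, Set.mem_iInter]
    rfl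
  rw [this]
  exact (ultrafilter_isClosed_basic _).inter
    (isClosed_iInter fun n => ultrafilter_isClosed_basic _)

lemma gam_nonempty (j : ℕ) : (gam j).Nonempty := by
  have hne : ∀ n : ℕ, ({f : ℕ →₀ ℕ | IsFINk j f ∧ Above n f}).Nonempty := by
    intro n
    refine ⟨Finsupp.single n j, ⟨⟨fun i => ?_, ⟨n, by simp⟩⟩, fun i hi => ?_⟩⟩
    · rw [Finsupp.single_apply]; split <;> omega
    · rw [Finsupp.single_apply] at hi
      by_contra hc
      simp [show ¬ (n = i) by omega] at hi
  set F := ⨅ n : ℕ, 𝓟 {f : ℕ →₀ ℕ | IsFINk j f ∧ Above n f} with hF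
  have hdir : Directed (· ≥ ·) (fun n : ℕ => 𝓟 {f : ℕ →₀ ℕ | IsFINk j f ∧ Above n f}) := by
    intro a b
    refine ⟨max a b, principal_mono.mpr ?_, principal_mono.mpr ?_⟩ <;>
      · rintro f ⟨h1, h2⟩
        exact ⟨h1, fun i hi => le_trans (by omega) (h2 i hi)⟩
  have : F.NeBot := iInf_neBot_of_directed hdir fun n => principal_neBot_iff.mpr (hne n)
  refine ⟨Ultrafilter.of F, ?_, ?_⟩
  · have : {f : ℕ →₀ ℕ | IsFINk j f ∧ Above 0 f} ∈ Ultrafilter.of F :=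
      Ultrafilter.of_le F (mem_iInf_of_mem 0 (mem_principal_self _))
    filter_upwards [this] with f hf using hf.1
  · intro n
    have : {f : ℕ →₀ ℕ | IsFINk j f ∧ Above n f} ∈ Ultrafilter.of F :=
      Ultrafilter.of_le F (mem_iInf_of_mem n (mem_principal_self _))
    filter_upwards [this] with f hf using hf.2

lemma tetris_zero : Tetris 0 = 0 := by
  ext i; rw [tetris_apply]; simp

lemma continuous_tmap : Continuous tmap :=
  ultrafilterBasis_is_basis.continuous_iff.2 <| Set.forall_mem_range.mpr fun s =>
    ultrafilter_isOpen_basic (Tetris ⁻¹' s)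

lemma pure_zero_gam : (pure 0 : Ultrafilter (ℕ →₀ ℕ)) ∈ gam 0 := by
  constructor
  · exact eventually_pure.mpr ⟨fun n => le_refl 0, ⟨0, rfl⟩⟩
  · intro n
    exact eventually_pure.mpr (fun i hi => absurd rfl hi)

lemma tmap_gam_one {V : Ultrafilter (ℕ →₀ ℕ)} (hV : V ∈ gam 1) : tmap V = pure 0 := by
  refine Ultrafilter.coe_inj.mp <| Filter.ext' fun p => ?_
  simp only [tmap, Ultrafilter.coe_map, Filter.eventually_map, Ultrafilter.coe_pure,
    eventually_pure]
  have h0 : ∀ᶠ f in V, Tetris f = 0 := by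
    filter_upwards [hV.1] with f hf
    ext i
    rw [tetris_apply]
    have := hf.1 i
    simp; omega
  constructor
  · intro h
    obtain ⟨f, hf, hp⟩ := (h.and h0).exists
    rwa [hp] at hf
  · intro h
    filter_upwards [h0] with f hf
    rw [hf]; exact h

lemma tmap_pure_zero : tmap (pure 0 : Ultrafilter (ℕ →₀ ℕ)) = pure 0 := by
  rw [tmap, Ultrafilter.map_pure, tetris_zero]

lemma chain_exists (K : ℕ) : ∃ U : ℕ → Ultrafilter (ℕ →₀ ℕ),
    U 0 = pure 0 ∧ (∀ j, j ≤ K → U j ∈ gam j) ∧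
    (∀ j, 1 ≤ j → j ≤ K → tmap (U j) = U (j - 1)) ∧
    (∀ i j, i ≤ j → j ≤ K → U i + U j = U j ∧ U j + U i = U j) := by
  induction K with
  | zero =>
    refine ⟨fun _ => pure 0, rfl, ?_, ?_, ?_⟩
    · intro j hj; interval_cases j; exact pure_zero_gam
    · intro j h1 h2; omega
    · intro i j hij hj
      interval_cases j; interval_cases i
      exact ⟨pure_zero_add _, pure_zero_add _⟩
  | succ K ih =>
    obtain ⟨U, hU0, hgam, htm, habs⟩ := ih
    -- key auxiliary facts
    have hUKgam : U K ∈ gam K := hgam K le_rfl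
    have hUKidem : U K + U K = U K := (habs K K le_rfl le_rfl).1
    have htk : U K + tmap (U K) = U K := by
      rcases Nat.eq_zero_or_pos K with h | h
      · subst h; rw [hU0, tmap_pure_zero, pure_zero_add]
      · rw [htm K h le_rfl]
        exact (habs (K - 1) K (by omega) le_rfl).2
    have hkt : tmap (U K) + U K = U K := by
      rcases Nat.eq_zero_or_pos K with h | h
      · subst h; rw [hU0, tmap_pure_zero, pure_zero_add]
      · rw [htm K h le_rfl]
        exact (habs (K - 1) K (by omega) le_rfl).1
    set S : Set (Ultrafilter (ℕ →₀ ℕ)) := gam (K + 1) ∩ {V | tmap V = U K} with hS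
    have hSadd : ∀ V ∈ S, ∀ W ∈ S, V + W ∈ S := by
      rintro V ⟨hV1, hV2⟩ W ⟨hW1, hW2⟩
      constructor
      · have := gam_add hV1 hW1; rwa [max_self] at this
      · show tmap (V + W) = U K
        rw [tmap_add hW1.2, hV2, hW2, hUKidem]
    have hSne : S.Nonempty := by
      rcases Nat.eq_zero_or_pos K with h | h
      · obtain ⟨V, hV⟩ := gam_nonempty 1
        subst h
        exact ⟨V, hV, by rw [Set.mem_setOf_eq, tmap_gam_one hV, hU0]⟩
      · refine ⟨(U K).map sec, ⟨?_, ?_⟩, ?_⟩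
        · rw [Ultrafilter.coe_map, Filter.eventually_map]
          filter_upwards [hUKgam.1] with f hf using isFINk_sec h hf
        · intro n
          rw [Ultrafilter.coe_map, Filter.eventually_map]
          filter_upwards [hUKgam.2 n] with f hf using above_sec hf
        · show tmap ((U K).map sec) = U K
          rw [tmap, Ultrafilter.map_map]
          have : Tetris ∘ sec = id := funext tetris_sec
          rw [this, Ultrafilter.map_id]
    have hScpt : IsCompact S :=
      ((gam_isClosed (K + 1)).inter
        (IsClosed.preimage continuous_tmap isClosed_singleton)).isCompact
    -- the compact subsemigroup S + U K
    set S' : Set (Ultrafilter (ℕ →₀ ℕ)) := (· + U K) '' S with hS'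
    have hS'sub : S' ⊆ S := by
      rintro _ ⟨V, hV, rfl⟩
      constructor
      · have := gam_add hV.1 hUKgam
        rwa [max_eq_left (Nat.le_succ K)] at this
      · show tmap (V + U K) = U K
        rw [tmap_add hUKgam.2, hV.2, htk]
    have hS'add : ∀ V ∈ S', ∀ W ∈ S', V + W ∈ S' := by
      rintro _ ⟨V, hV, rfl⟩ _ ⟨W, hW, rfl⟩
      have hUKW : U K + W ∈ S := by
        constructor
        · have := gam_add hUKgam hW.1
          rwa [max_eq_right (Nat.le_succ K)] at this
        · show tmap (U K + W) = U K
          rw [tmap_add hW.1.2, hW.2, hkt]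
      refine ⟨V + (U K + W), hSadd V hV _ hUKW, ?_⟩
      show (V + (U K + W)) + U K = (V + U K) + (W + U K)
      rw [add_assoc, add_assoc, add_assoc]
    obtain ⟨W', hW'S', hW'idem⟩ :=
      exists_idempotent_in_compact_add_subsemigroup Ultrafilter.continuous_add_left S'
        (hSne.image _) (hScpt.image (Ultrafilter.continuous_add_left (U K))) hS'add
    have hW'S : W' ∈ S := hS'sub hW'S'
    have hW'UK : W' + U K = W' := by
      obtain ⟨V, _, rfl⟩ := hW'S'
      rw [add_assoc, hUKidem]
    have hW'2 : tmap W' = U K := hW'S.2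
    refine ⟨fun j => if j = K + 1 then U K + W' else U j, ?_, ?_, ?_, ?_⟩
    · simp only [if_neg (by omega : (0:ℕ) ≠ K + 1)]; exact hU0
    · intro j hj
      by_cases h : j = K + 1
      · subst h
        simp only [if_pos rfl]
        have := gam_add hUKgam hW'S.1
        rwa [max_eq_right (Nat.le_succ K)] at this
      · simp only [if_neg h]
        exact hgam j (by omega)
    · intro j h1 h2
      by_cases h : j = K + 1
      · subst h
        simp only [if_pos rfl, Nat.add_sub_cancel, if_neg (by omega : K ≠ K + 1)]
        show tmap (U K + W') = U K
        rw [tmap_add hW'S.1.2, hW'2, hkt]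
      · simp only [if_neg h, if_neg (by omega : j - 1 ≠ K + 1)]
        exact htm j h1 (by omega)
    · intro i j hij hj
      by_cases h : j = K + 1
      · subst h
        simp only [if_pos rfl]
        by_cases hi : i = K + 1
        · subst hi
          simp only [if_pos rfl]
          constructor <;>
          · show (U K + W') + (U K + W') = U K + W'
            calc (U K + W') + (U K + W') = U K + ((W' + U K) + W') := by
                  rw [add_assoc, add_assoc]
              _ = U K + W' := by rw [hW'UK, hW'idem]
        · simp only [if_neg hi]
          have hiK : i ≤ K := by omega
          constructor
          · show U i + (U K + W') = U K + W'
            rw [← add_assoc, (habs i K hiK le_rfl).1]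
          · show (U K + W') + U i = U K + W'
            have : W' + U i = W' := by
              calc W' + U i = (W' + U K) + U i := by rw [hW'UK]
                _ = W' + (U K + U i) := add_assoc _ _ _
                _ = W' + U K := by rw [(habs i K hiK le_rfl).2]
                _ = W' := hW'UK
            rw [add_assoc, this]
      · simp only [if_neg h, if_neg (by omega : i ≠ K + 1)]
        exact habs i j hij (by omega)

lemma exists_color {α : Type*} {r : ℕ} (U : Ultrafilter α) (c : α → Fin r) :
    ∃ v : Fin r, ∀ᶠ f in U, c f = v := by
  by_contra hc
  push_neg at hc
  have h1 : ∀ v : Fin r, ∀ᶠ f in U, c f ≠ v := by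
    intro v
    have := hc v
    exact Ultrafilter.eventually_not.mpr (by simpa using this)
  have h2 : ∀ᶠ f in (U : Filter α), ∀ v : Fin r, c f ≠ v :=
    eventually_all.mpr h1
  obtain ⟨f, hf⟩ := h2.exists
  exact hf (c f) rfl

/-- iterated largeness tower -/
def Iter {r : ℕ} (U : ℕ → Ultrafilter (ℕ →₀ ℕ)) (c : (ℕ →₀ ℕ) → Fin r) (E : ℕ → Fin r) :
    List ℕ → (ℕ →₀ ℕ) → ℕ → Prop
  | [], g, m => c g = E m
  | ℓ :: L, g, m => ∀ᶠ x in U ℓ, Iter U c E L (g + x) (max m ℓ)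

lemma iter_mem {r K : ℕ} {U : ℕ → Ultrafilter (ℕ →₀ ℕ)} {c : (ℕ →₀ ℕ) → Fin r}
    {E : ℕ → Fin r} (hE : ∀ m, ∀ᶠ f in U m, c f = E m)
    (habs : ∀ i j, i ≤ j → j ≤ K → U i + U j = U j ∧ U j + U i = U j) :
    ∀ L : List ℕ, (∀ ℓ ∈ L, ℓ ≤ K) → ∀ m, m ≤ K → ∀ᶠ g in U m, Iter U c E L g m := by
  intro L
  induction L with
  | nil => intro _ m _; exact hE m
  | cons ℓ L ih =>
    intro hL m hm
    have hℓ : ℓ ≤ K := hL ℓ (List.mem_cons_self)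
    have key : U m + U ℓ = U (max m ℓ) := by
      rcases le_total m ℓ with h | h
      · rw [max_eq_right h]; exact (habs m ℓ h hℓ).1
      · rw [max_eq_left h]; exact (habs ℓ m h hm).2
    have hIH : ∀ᶠ g in U (max m ℓ), Iter U c E L g (max m ℓ) :=
      ih (fun x hx => hL x (List.mem_cons_of_mem _ hx)) (max m ℓ) (by omega)
    rw [← key, Ultrafilter.eventually_add] at hIH
    exact hIH

lemma Iter_nil {r : ℕ} {U : ℕ → Ultrafilter (ℕ →₀ ℕ)} {c : (ℕ →₀ ℕ) → Fin r} {E : ℕ → Fin r}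
    {g : ℕ →₀ ℕ} {m : ℕ} : Iter U c E [] g m ↔ c g = E m := Iff.rfl

lemma Iter_cons {r : ℕ} {U : ℕ → Ultrafilter (ℕ →₀ ℕ)} {c : (ℕ →₀ ℕ) → Fin r} {E : ℕ → Fin r}
    {ℓ : ℕ} {L : List ℕ} {g : ℕ →₀ ℕ} {m : ℕ} :
    Iter U c E (ℓ :: L) g m ↔ ∀ᶠ x in U ℓ, Iter U c E L (g + x) (max m ℓ) := Iff.rfl

lemma selection (K N r : ℕ) (c : (ℕ →₀ ℕ) → Fin r) :
    ∃ (h : ℕ → (ℕ →₀ ℕ)) (e : Fin r),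
      (∀ i, i < N → IsFINk K (h i)) ∧ (∀ i j, i < j → j < N → Blk (h i) (h j)) ∧
      ∀ s : ℕ → ℕ, (∀ i, i < N → s i ≤ K) → (Finset.range N).sup s = K →
        c (∑ i ∈ Finset.range N, Tetris^[K - s i] (h i)) = e := by
  obtain ⟨U, hU0, hgam, htm, habs⟩ := chain_exists K
  choose E hE using fun m => exists_color (U m) c
  have hmapd : ∀ d, d < K → Ultrafilter.map (Tetris^[d]) (U K) = U (K - d) := by
    intro d
    induction d with
    | zero =>
      intro _
      simp only [Function.iterate_zero, Ultrafilter.map_id, Nat.sub_zero]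
    | succ d ih =>
      intro hd
      have h1 : Ultrafilter.map (Tetris^[d]) (U K) = U (K - d) := ih (by omega)
      rw [Function.iterate_succ', ← Ultrafilter.map_map, h1]
      have h2 := htm (K - d) (by omega) (by omega)
      show tmap (U (K - d)) = U (K - (d + 1))
      rw [h2]
      congr 1
  have hmap : ∀ a, 1 ≤ a → a ≤ K → Ultrafilter.map (Tetris^[K - a]) (U K) = U a := by
    intro a h1 h2
    have := hmapd (K - a) (by omega)
    rwa [show K - (K - a) = a by omega] at this
  have main : ∀ n, ∃ h : ℕ → (ℕ →₀ ℕ),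
      (∀ i, i < n → IsFINk K (h i)) ∧ (∀ i j, i < j → j < n → Blk (h i) (h j)) ∧
      (∀ s : ℕ → ℕ, (∀ i, i < n → s i ≤ K) → ∀ L : List ℕ, (∀ ℓ ∈ L, ℓ ≤ K) →
        L.length + n ≤ N →
        Iter U c E L (∑ i ∈ Finset.range n, Tetris^[K - s i] (h i)) ((Finset.range n).sup s)) := by
    intro n
    induction n with
    | zero =>
      refine ⟨fun _ => 0, fun i hi => absurd hi (Nat.not_lt_zero i), fun i j hij hj => absurd hj (Nat.not_lt_zero j), ?_⟩
      intro s hs L hL hlen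
      simp only [Finset.range_zero, Finset.sum_empty, Finset.sup_empty, Nat.bot_eq_zero]
      have h1 := iter_mem hE habs L hL 0 (Nat.zero_le K)
      rw [hU0] at h1
      simp only [Ultrafilter.coe_pure, eventually_pure] at h1
      exact h1
    | succ n ihn =>
      obtain ⟨h, hFIN, hBlk, hInv⟩ := ihn
      choose bf hbf using fun i => exists_below (h i)
      set b := (Finset.range n).sup bf with hb
      have hBelow : ∀ i, i < n → Below b (h i) := by
        intro i hi x hx
        have h1 := hbf i x hx
        have h2 : bf i ≤ b := Finset.le_sup (Finset.mem_range.mpr hi)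
        omega
      set sfun : (Fin n → Fin (K + 1)) → ℕ → ℕ :=
        fun σ i => if hi : i < n then (σ ⟨i, hi⟩ : ℕ) else 0 with hsfun
      have hLfin : {l : List (Fin (K + 1)) | l.length + (n + 1) ≤ N}.Finite :=
        (List.finite_length_le (Fin (K + 1)) N).subset (fun l hl => by
          simp only [Set.mem_setOf_eq] at *
          omega)
      haveI : Finite ({l : List (Fin (K + 1)) | l.length + (n + 1) ≤ N} : Set _) :=
        hLfin.to_subtype
      have hbig : ∀ᶠ x in U K, (IsFINk K x ∧ Above b x) ∧
          ∀ σ : Fin n → Fin (K + 1), ∀ a : Fin K,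
          ∀ l : {l : List (Fin (K + 1)) | l.length + (n + 1) ≤ N},
            Iter U c E (l.val.map (fun y : Fin (K + 1) => y.val))
              ((∑ i ∈ Finset.range n, Tetris^[K - sfun σ i] (h i)) + Tetris^[K - ((a : ℕ) + 1)] x)
              (max ((Finset.range n).sup (sfun σ)) ((a : ℕ) + 1)) := by
        refine Eventually.and (Eventually.and ?_ ?_) ?_
        · exact (hgam K le_rfl).1
        · exact (hgam K le_rfl).2 b
        · rw [eventually_all]
          intro σ
          rw [eventually_all]
          intro a
          rw [eventually_all]
          intro l
          have hcons : Iter U c E (((a : ℕ) + 1) :: l.val.map (fun y : Fin (K + 1) => y.val))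
              (∑ i ∈ Finset.range n, Tetris^[K - sfun σ i] (h i))
              ((Finset.range n).sup (sfun σ)) := by
            apply hInv
            · intro i hi
              rw [hsfun]
              simp only [dif_pos hi]
              have := (σ ⟨i, hi⟩).isLt
              omega
            · intro ℓ hℓ
              rcases List.mem_cons.mp hℓ with h' | h'
              · have := a.isLt; omega
              · obtain ⟨y, hy, rfl⟩ := List.mem_map.mp h'
                have := y.isLt
                omega
            · have hlen := l.property
              simp only [Set.mem_setOf_eq] at hlen
              simp only [List.length_cons, List.length_map]
              omega
          rw [Iter_cons] at hcons
          rw [← hmap ((a : ℕ) + 1) (by omega) (by have := a.isLt; omega)] at hcons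
          rw [Ultrafilter.coe_map, eventually_map] at hcons
          exact hcons
      obtain ⟨x, ⟨hxFIN, hxAb⟩, hxIter⟩ := hbig.exists
      refine ⟨Function.update h n x, ?_, ?_, ?_⟩
      · intro i hi
        by_cases h' : i = n
        · subst h'; rw [Function.update_self]; exact hxFIN
        · rw [Function.update_of_ne h']; exact hFIN i (by omega)
      · intro i j hij hj
        by_cases h' : j = n
        · subst h'
          rw [Function.update_self, Function.update_of_ne (by omega)]
          intro p hp q hq
          have h1 : (h i) p ≠ 0 := Finsupp.mem_support_iff.mp hp
          have h2 : x q ≠ 0 := Finsupp.mem_support_iff.mp hq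
          have h3 := hBelow i hij p h1
          have h4 := hxAb q h2
          omega
        · rw [Function.update_of_ne (by omega), Function.update_of_ne h']
          exact hBlk i j hij (by omega)
      · intro s hs L hL hlen
        have hsn : s n ≤ K := hs n (by omega)
        have hupd_lt : ∀ i, i < n → Function.update h n x i = h i := by
          intro i hi
          exact Function.update_of_ne (by omega : i ≠ n) x h
        have hsum : ∑ i ∈ Finset.range (n + 1), Tetris^[K - s i] (Function.update h n x i)
            = (∑ i ∈ Finset.range n, Tetris^[K - s i] (h i)) + Tetris^[K - s n] x := by
          rw [Finset.sum_range_succ, Function.update_self]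
          congr 1
          refine Finset.sum_congr rfl fun i hi => ?_
          rw [hupd_lt i (Finset.mem_range.mp hi)]
        have hsup : (Finset.range (n + 1)).sup s = max ((Finset.range n).sup s) (s n) := by
          rw [Finset.range_add_one, Finset.sup_insert]
          exact max_comm _ _
        set σ : Fin n → Fin (K + 1) := fun i => ⟨s i, by have := hs i (by omega); omega⟩ with hσ
        have hsfeq : ∀ i, i < n → sfun σ i = s i := by
          intro i hi
          rw [hsfun]
          simp only [dif_pos hi, hσ]
        have hgeq : ∑ i ∈ Finset.range n, Tetris^[K - sfun σ i] (h i)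
            = ∑ i ∈ Finset.range n, Tetris^[K - s i] (h i) :=
          Finset.sum_congr rfl fun i hi => by rw [hsfeq i (Finset.mem_range.mp hi)]
        have hmeq : (Finset.range n).sup (sfun σ) = (Finset.range n).sup s :=
          Finset.sup_congr rfl fun i hi => hsfeq i (Finset.mem_range.mp hi)
        rcases Nat.eq_zero_or_pos (s n) with ha | ha
        · rw [hsum, hsup, ha, Nat.sub_zero, tetris_iter_eq_zero hxFIN.1, add_zero,
            max_eq_left (Nat.zero_le _)]
          exact hInv s (fun i hi => hs i (by omega)) L hL (by omega)
        · set a' : Fin K := ⟨s n - 1, by omega⟩ with ha'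
          set l : List (Fin (K + 1)) :=
            L.attach.map (fun p => (⟨p.val, by have := hL p.val p.property; omega⟩ : Fin (K + 1)))
            with hl
          have hlmem : l ∈ {l : List (Fin (K + 1)) | l.length + (n + 1) ≤ N} := by
            simp only [Set.mem_setOf_eq, hl, List.length_map, List.length_attach]
            omega
          have hlmap : l.map (fun y : Fin (K + 1) => (y : ℕ)) = L := by
            rw [hl, List.map_map]
            exact List.attach_map_subtype_val L
          have hkey := hxIter σ a' ⟨l, hlmem⟩
          have ha'1 : (a' : ℕ) + 1 = s n := by
            have hv : (a' : ℕ) = s n - 1 := rfl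
            omega
          rw [ha'1, hlmap, hgeq, hmeq] at hkey
          rw [hsum, hsup]
          exact hkey
  obtain ⟨h, hFIN, hBlk, hInv⟩ := main N
  refine ⟨h, E K, hFIN, hBlk, ?_⟩
  intro s hs hsup
  have h1 := hInv s hs [] (by simp) (by simp)
  rw [Iter_nil] at h1
  rwa [hsup] at h1

lemma sup_eq_of_isFINk {K N : ℕ} (hK : 1 ≤ K) {h : ℕ → (ℕ →₀ ℕ)}
    (hFIN : ∀ i, i < N → IsFINk K (h i)) (hBlk : ∀ i j, i < j → j < N → Blk (h i) (h j))
    {s : ℕ → ℕ} (hs : ∀ i, i < N → s i ≤ K)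
    (hsum : IsFINk K (∑ i ∈ Finset.range N, Tetris^[K - s i] (h i))) :
    (Finset.range N).sup s = K := by
  have hle : (Finset.range N).sup s ≤ K :=
    Finset.sup_le fun i hi => hs i (Finset.mem_range.mp hi)
  by_contra hne
  have hlt : ∀ i, i < N → s i < K := by
    intro i hi
    have := Finset.le_sup (f := s) (Finset.mem_range.mpr hi)
    omega
  obtain ⟨x, hx⟩ := hsum.2
  rw [Finsupp.finset_sum_apply] at hx
  by_cases hall : ∀ i ∈ Finset.range N, Tetris^[K - s i] (h i) x = 0
  · rw [Finset.sum_eq_zero hall] at hx; omega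
  · push_neg at hall
    obtain ⟨i0, hi0mem, hi0⟩ := hall
    have hi0N := Finset.mem_range.mp hi0mem
    have hsingle : ∀ j ∈ Finset.range N, j ≠ i0 → Tetris^[K - s j] (h j) x = 0 := by
      intro j hjmem hj
      by_contra hjx
      have hjN := Finset.mem_range.mp hjmem
      have hxi0 : (h i0) x ≠ 0 := by
        have := tetris_iter_apply (K - s i0) (h i0) x; omega
      have hxj : (h j) x ≠ 0 := by
        have := tetris_iter_apply (K - s j) (h j) x; omega
      rcases lt_trichotomy j i0 with hlt' | heq | hgt
      · exact absurd (hBlk j i0 hlt' hi0N x (Finsupp.mem_support_iff.mpr hxj) x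
          (Finsupp.mem_support_iff.mpr hxi0)) (lt_irrefl x)
      · exact hj heq
      · exact absurd (hBlk i0 j hgt hjN x (Finsupp.mem_support_iff.mpr hxi0) x
          (Finsupp.mem_support_iff.mpr hxj)) (lt_irrefl x)
    rw [Finset.sum_eq_single_of_mem i0 hi0mem hsingle] at hx
    have h1 := tetris_iter_apply (K - s i0) (h i0) x
    have h2 := (hFIN i0 hi0N).1 x
    have h3 := hlt i0 hi0N
    omega

theorem FINk_support_determined' (k N r : ℕ) (hr : 1 ≤ r) :
    ∃ Nbar : ℕ, ∀ c : (ℕ →₀ ℕ) → Fin r,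
      ∃ h : ℕ → (ℕ →₀ ℕ),
        (∀ i < N, h i ∈ FINkN (k + 1) Nbar) ∧ IsBlockSeqFin N h ∧
        ∀ s t : ℕ → ℕ,
          (∀ i < N, s i ≤ k + 1) → (∀ i < N, t i ≤ k + 1) →
          (∀ i < N, s i = k + 1 ↔ t i = k + 1) →
          IsFINk (k + 1) (∑ i ∈ Finset.range N, Tetris^[k + 1 - s i] (h i)) →
          IsFINk (k + 1) (∑ i ∈ Finset.range N, Tetris^[k + 1 - t i] (h i)) →
          c (∑ i ∈ Finset.range N, Tetris^[k + 1 - s i] (h i)) =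
            c (∑ i ∈ Finset.range N, Tetris^[k + 1 - t i] (h i)) := by
  by_contra hcon
  rw [not_exists] at hcon
  have hbad : ∀ Nbar, ∃ c : (ℕ →₀ ℕ) → Fin r, ∀ h : ℕ → (ℕ →₀ ℕ),
      ¬ ((∀ i < N, h i ∈ FINkN (k + 1) Nbar) ∧ IsBlockSeqFin N h ∧
        ∀ s t : ℕ → ℕ,
          (∀ i < N, s i ≤ k + 1) → (∀ i < N, t i ≤ k + 1) →
          (∀ i < N, s i = k + 1 ↔ t i = k + 1) →
          IsFINk (k + 1) (∑ i ∈ Finset.range N, Tetris^[k + 1 - s i] (h i)) →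
          IsFINk (k + 1) (∑ i ∈ Finset.range N, Tetris^[k + 1 - t i] (h i)) →
          c (∑ i ∈ Finset.range N, Tetris^[k + 1 - s i] (h i)) =
            c (∑ i ∈ Finset.range N, Tetris^[k + 1 - t i] (h i))) := by
    intro Nbar
    have h1 := hcon Nbar
    rw [not_forall] at h1
    obtain ⟨c, hc⟩ := h1
    rw [not_exists] at hc
    exact ⟨c, hc⟩
  choose cseq hcseq using hbad
  -- the ultrafilter limit coloring
  choose cs hcs using fun f : ℕ →₀ ℕ =>
    exists_color (Filter.hyperfilter ℕ) (fun n => cseq n f)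
  obtain ⟨h, e, hFIN, hBlk, hcol⟩ := selection (k + 1) N r cs
  choose bf hbf using fun i => exists_below (h i)
  set M0 := (Finset.range N).sup bf with hM0
  -- the finitely many relevant sums
  set sfun : (Fin N → Fin (k + 2)) → ℕ → ℕ :=
    fun σ i => if hi : i < N then (σ ⟨i, hi⟩ : ℕ) else 0 with hsfun
  set sumof : (Fin N → Fin (k + 2)) → (ℕ →₀ ℕ) :=
    fun σ => ∑ i ∈ Finset.range N, Tetris^[k + 1 - sfun σ i] (h i) with hsumof
  have hagree : ∀ᶠ n in (Filter.hyperfilter ℕ : Filter ℕ),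
      (∀ σ : Fin N → Fin (k + 2), cseq n (sumof σ) = cs (sumof σ)) ∧ M0 ≤ n := by
    refine Eventually.and (eventually_all.mpr fun σ => hcs (sumof σ)) ?_
    have : {n : ℕ | M0 ≤ n} ∈ Filter.cofinite := by
      rw [mem_cofinite]
      have : {n : ℕ | M0 ≤ n}ᶜ = {n : ℕ | n < M0} := by
        ext n; simp [Nat.not_le]
      rw [this]
      exact Set.finite_lt_nat M0
    exact Filter.hyperfilter_le_cofinite this
  obtain ⟨n0, hn0agree, hn0ge⟩ := hagree.exists
  apply hcseq n0 h
  have hcanon : ∀ s : ℕ → ℕ, ∀ hs : (∀ i < N, s i ≤ k + 1),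
      ∑ i ∈ Finset.range N, Tetris^[k + 1 - s i] (h i) =
        sumof (fun i : Fin N => ⟨s i, by have := hs i i.isLt; omega⟩) := by
    intro s hs
    rw [hsumof]
    refine Finset.sum_congr rfl fun i hi => ?_
    have hiN := Finset.mem_range.mp hi
    rw [hsfun]
    simp only [dif_pos hiN]
  refine ⟨?_, ?_, ?_⟩
  · intro i hi
    refine ⟨hFIN i hi, fun x hx => ?_⟩
    have h1 := hbf i x (Finsupp.mem_support_iff.mp hx)
    have h2 : bf i ≤ M0 := Finset.le_sup (Finset.mem_range.mpr hi)
    omega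
  · exact fun i j hij hj => hBlk i j hij hj
  · intro s t hs ht hiff hFs hFt
    have hsups : (Finset.range N).sup s = k + 1 :=
      sup_eq_of_isFINk (by omega) hFIN hBlk hs hFs
    have hsupt : (Finset.range N).sup t = k + 1 :=
      sup_eq_of_isFINk (by omega) hFIN hBlk ht hFt
    have hcs1 := hcol s hs hsups
    have hct1 := hcol t ht hsupt
    have heq1 := hcanon s hs
    have heq2 := hcanon t ht
    calc cseq n0 (∑ i ∈ Finset.range N, Tetris^[k + 1 - s i] (h i))
        = cs (∑ i ∈ Finset.range N, Tetris^[k + 1 - s i] (h i)) := by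
          rw [heq1]
          exact hn0agree (fun i : Fin N => ⟨s i, by have := hs i i.isLt; omega⟩)
      _ = e := hcs1
      _ = cs (∑ i ∈ Finset.range N, Tetris^[k + 1 - t i] (h i)) := hct1.symm
      _ = cseq n0 (∑ i ∈ Finset.range N, Tetris^[k + 1 - t i] (h i)) := by
          rw [heq2]
          exact (hn0agree (fun i : Fin N => ⟨t i, by have := ht i i.isLt; omega⟩)).symm

/-- For all `k ≥ 1`, `N`, `r ≥ 1` there is `N̄` such that for every `r`-coloring of
`FIN_{k+1}(N̄)` there is a block sequence `(h_i)_{i<N}` in `FIN_{k+1}(N̄)` such that the color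
of any element `Σ_{i<N} T^{k+1-s_i}(h_i)` of `FIN_{k+1}` depends only on the set of `i < N`
with `s_i = k+1`. -/
theorem FINk_support_determined (k N r : ℕ) (hk : 1 ≤ k) (hr : 1 ≤ r) :
    ∃ Nbar : ℕ, ∀ c : (ℕ →₀ ℕ) → Fin r,
      ∃ h : ℕ → (ℕ →₀ ℕ),
        (∀ i < N, h i ∈ FINkN (k + 1) Nbar) ∧ IsBlockSeqFin N h ∧
        ∀ s t : ℕ → ℕ,
          (∀ i < N, s i ≤ k + 1) → (∀ i < N, t i ≤ k + 1) →
          (∀ i < N, s i = k + 1 ↔ t i = k + 1) →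
          IsFINk (k + 1) (∑ i ∈ Finset.range N, Tetris^[k + 1 - s i] (h i)) →
          IsFINk (k + 1) (∑ i ∈ Finset.range N, Tetris^[k + 1 - t i] (h i)) →
          c (∑ i ∈ Finset.range N, Tetris^[k + 1 - s i] (h i)) =
            c (∑ i ∈ Finset.range N, Tetris^[k + 1 - t i] (h i)) :=
  FINk_support_determined' k N r hr
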